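/- Let G₁ and G₂ be the blocks of an amalgam decomposition of G along amalgam separation (V₁,A₁,K,A₂,V₂), where G_i is obtained from G[V_i ∪ A_i ∪ K] by adding one new vertex r_i fully adjacent to A_i ∪ K. Then STAB(G) = { x_G : x ∈ ℝ^{V ∪ {r₁,r₂}}, x_{G₁} ∈ STAB(G₁), x_{G₂} ∈ STAB(G₂), x(K) + x_{r₁} + x_{r₂} ≥ 1 }. -/

import Mathlib

open Finset
open scoped Classical

set_option linter.unusedSectionVars false

variable {V : Type*} [Fintype V] [DecidableEq V]

/-- A stable (independent) set. -/
def IsStable {W : Type*} (G : SimpleGraph W) (S : Finset W) : Prop :=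
  ∀ a ∈ S, ∀ b ∈ S, ¬ G.Adj a b

/-- The stable set polytope. -/
noncomputable def stab {W : Type*} [Fintype W] (G : SimpleGraph W) : Set (W → ℝ) :=
  convexHull ℝ {x | ∃ S : Finset W, IsStable G S ∧
    x = fun w => if w ∈ S then (1 : ℝ) else 0}

/-- `x` restricted to `W₁` lies in the stable set polytope of `H[W₁]`. -/
noncomputable def MemStabOn {W : Type*} [Fintype W] [DecidableEq W]
    (H : SimpleGraph W) (W₁ : Finset W) (x : W → ℝ) : Prop :=
  (fun w : {w // w ∈ W₁} => x w.1) ∈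
    convexHull ℝ {z : {w // w ∈ W₁} → ℝ | ∃ S : Finset W, S ⊆ W₁ ∧ IsStable H S ∧
      z = fun w => if w.1 ∈ S then (1 : ℝ) else 0}

/-- `G` together with the two block vertices `r₁ = inr false`, `r₂ = inr true`,
`r_i` fully adjacent to `A_i ∪ K`; the blocks of the amalgam decomposition are the
induced subgraphs on `V_i ∪ A_i ∪ K ∪ {r_i}`. -/
noncomputable def blockGraph (G : SimpleGraph V) (A₁ K A₂ : Finset V) :
    SimpleGraph (V ⊕ Bool) :=
  SimpleGraph.fromRel (fun x y =>
    match x, y with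
    | Sum.inl a, Sum.inl b => G.Adj a b
    | Sum.inl a, Sum.inr b => (b = false ∧ a ∈ A₁ ∪ K) ∨ (b = true ∧ a ∈ A₂ ∪ K)
    | Sum.inr b, Sum.inl a => (b = false ∧ a ∈ A₁ ∪ K) ∨ (b = true ∧ a ∈ A₂ ∪ K)
    | Sum.inr _, Sum.inr _ => False)

lemma bg_adj_inl {G : SimpleGraph V} {A₁ K A₂ : Finset V} {a b : V} :
    (blockGraph G A₁ K A₂).Adj (Sum.inl a) (Sum.inl b) ↔ G.Adj a b := by
  simp only [blockGraph, SimpleGraph.fromRel_adj]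
  constructor
  · rintro ⟨-, h | h⟩
    · exact h
    · exact h.symm
  · intro h
    refine ⟨?_, Or.inl h⟩
    simp only [ne_eq, Sum.inl.injEq]
    rintro rfl
    exact G.irrefl h

lemma bg_adj_inl_inr {G : SimpleGraph V} {A₁ K A₂ : Finset V} {a : V} {b : Bool} :
    (blockGraph G A₁ K A₂).Adj (Sum.inl a) (Sum.inr b) ↔
      ((b = false ∧ a ∈ A₁ ∪ K) ∨ (b = true ∧ a ∈ A₂ ∪ K)) := by
  simp only [blockGraph, SimpleGraph.fromRel_adj]
  constructor
  · rintro ⟨-, h | h⟩ <;> exact h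
  · intro h
    exact ⟨by simp, Or.inl h⟩

lemma bg_not_adj_inr {G : SimpleGraph V} {A₁ K A₂ : Finset V} {b c : Bool} :
    ¬ (blockGraph G A₁ K A₂).Adj (Sum.inr b) (Sum.inr c) := by
  simp only [blockGraph, SimpleGraph.fromRel_adj]
  rintro ⟨-, h | h⟩ <;> exact h

lemma isStable_subset {W : Type*} {G : SimpleGraph W} {S S' : Finset W}
    (h : S' ⊆ S) (hS : IsStable G S) : IsStable G S' :=
  fun a ha b hb => hS a (h ha) b (h hb)

lemma memStabOn_elim {W : Type*} [Fintype W] [DecidableEq W] (H : SimpleGraph W)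
    (W₁ : Finset W) (x : W → ℝ) (h : MemStabOn H W₁ x) :
    ∃ (ι : Type) (t : Finset ι) (w : ι → ℝ) (S : ι → Finset W),
      (∀ i ∈ t, 0 ≤ w i) ∧ (∑ i ∈ t, w i = 1) ∧
      (∀ i ∈ t, S i ⊆ W₁) ∧ (∀ i ∈ t, IsStable H (S i)) ∧
      (∀ v ∈ W₁, x v = ∑ i ∈ t, if v ∈ S i then w i else 0) := by
  rw [MemStabOn, _root_.convexHull_eq] at h
  obtain ⟨ι, t, w, z, hw0, hw1, hz, hcm⟩ := h
  classical
  set P : ({w // w ∈ W₁} → ℝ) → Prop := fun y => ∃ S : Finset W, S ⊆ W₁ ∧ IsStable H S ∧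
      y = fun w => if w.1 ∈ S then (1 : ℝ) else 0 with hP
  have hz' : ∀ i ∈ t, P (z i) := hz
  set S : ι → Finset W := fun i => if h : P (z i) then h.choose else ∅ with hS
  have hSprop : ∀ i ∈ t, S i ⊆ W₁ ∧ IsStable H (S i) ∧
      z i = fun w => if w.1 ∈ S i then (1 : ℝ) else 0 := by
    intro i hi
    have hp := hz' i hi
    simp only [hS, dif_pos hp]
    exact hp.choose_spec
  refine ⟨ι, t, w, S, hw0, hw1, fun i hi => (hSprop i hi).1, fun i hi => (hSprop i hi).2.1, ?_⟩
  intro v hv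
  rw [Finset.centerMass_eq_of_sum_1 _ _ hw1] at hcm
  have := congrFun hcm ⟨v, hv⟩
  simp only [Finset.sum_apply, Pi.smul_apply, smul_eq_mul] at this
  rw [← this]
  refine Finset.sum_congr rfl fun i hi => ?_
  rw [(hSprop i hi).2.2]
  simp only
  split <;> simp

lemma coupling_marg1 {ι₁ ι₂ Γ : Type*} [DecidableEq Γ]
    (t₁ : Finset ι₁) (t₂ : Finset ι₂) (lam : ι₁ → ℝ) (mu : ι₂ → ℝ)
    (g1 : ι₁ → Γ) (g2 : ι₂ → Γ)
    (h1 : ∀ p ∈ t₁, 0 ≤ lam p)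
    (hm : ∀ γ, (∑ p ∈ t₁, if g1 p = γ then lam p else 0)
             = ∑ q ∈ t₂, if g2 q = γ then mu q else 0)
    {p : ι₁} (hp : p ∈ t₁) :
    ∑ q ∈ t₂, (if g1 p = g2 q then
        lam p * mu q / (∑ p' ∈ t₁, if g1 p' = g1 p then lam p' else 0) else 0)
      = lam p := by
  have key : ∀ a M : ℝ, 0 ≤ a → a ≤ M → M * (a / M) = a := by
    intro a M ha hle
    rcases eq_or_ne M 0 with rfl | h
    · have : a = 0 := le_antisymm hle ha
      simp [this]
    · field_simp
  have hsum : ∑ q ∈ t₂, (if g1 p = g2 q then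
        lam p * mu q / (∑ p' ∈ t₁, if g1 p' = g1 p then lam p' else 0) else 0)
      = (∑ q ∈ t₂, if g2 q = g1 p then mu q else 0)
        * (lam p / (∑ p' ∈ t₁, if g1 p' = g1 p then lam p' else 0)) := by
    rw [Finset.sum_mul]
    refine Finset.sum_congr rfl fun q _ => ?_
    by_cases h : g1 p = g2 q
    · rw [if_pos h, if_pos h.symm]; ring
    · rw [if_neg h, if_neg (fun hh => h hh.symm), zero_mul]
  rw [hsum, ← hm]
  have hle : lam p ≤ ∑ p' ∈ t₁, if g1 p' = g1 p then lam p' else 0 := by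
    have := Finset.single_le_sum (s := t₁)
      (f := fun p' => if g1 p' = g1 p then lam p' else 0)
      (fun i hi => by split; exacts [h1 i hi, le_rfl]) hp
    simpa using this
  exact key (lam p) _ (h1 p hp) hle

lemma coupling_marg2 {ι₁ ι₂ Γ : Type*} [DecidableEq Γ]
    (t₁ : Finset ι₁) (t₂ : Finset ι₂) (lam : ι₁ → ℝ) (mu : ι₂ → ℝ)
    (g1 : ι₁ → Γ) (g2 : ι₂ → Γ)
    (h2 : ∀ q ∈ t₂, 0 ≤ mu q)
    (hm : ∀ γ, (∑ p ∈ t₁, if g1 p = γ then lam p else 0)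
             = ∑ q ∈ t₂, if g2 q = γ then mu q else 0)
    {q : ι₂} (hq : q ∈ t₂) :
    ∑ p ∈ t₁, (if g1 p = g2 q then
        lam p * mu q / (∑ p' ∈ t₁, if g1 p' = g1 p then lam p' else 0) else 0)
      = mu q := by
  have key : ∀ a M : ℝ, 0 ≤ a → a ≤ M → M * (a / M) = a := by
    intro a M ha hle
    rcases eq_or_ne M 0 with rfl | h
    · have : a = 0 := le_antisymm hle ha
      simp [this]
    · field_simp
  have hsum : ∑ p ∈ t₁, (if g1 p = g2 q then
      lam p * mu q / (∑ p' ∈ t₁, if g1 p' = g1 p then lam p' else 0) else 0)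
      = (∑ p ∈ t₁, if g1 p = g2 q then lam p else 0)
        * (mu q / (∑ p' ∈ t₁, if g1 p' = g2 q then lam p' else 0)) := by
    rw [Finset.sum_mul]
    refine Finset.sum_congr rfl fun p _ => ?_
    by_cases h : g1 p = g2 q
    · rw [if_pos h, if_pos h, h]; ring
    · rw [if_neg h, if_neg h, zero_mul]
  rw [hsum]
  have hle : mu q ≤ ∑ p' ∈ t₁, if g1 p' = g2 q then lam p' else 0 := by
    rw [hm (g2 q)]
    have := Finset.single_le_sum (s := t₂)
      (f := fun q' => if g2 q' = g2 q then mu q' else 0)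
      (fun i hi => by split; exacts [h2 i hi, le_rfl]) hq
    simpa using this
  exact key (mu q) _ (h2 q hq) hle

lemma memStabOn_indicator {W : Type*} [Fintype W] [DecidableEq W] (H : SimpleGraph W)
    (W₁ : Finset W) (S : Finset W) (hS : IsStable H S) :
    MemStabOn H W₁ (fun w => if w ∈ S then (1 : ℝ) else 0) := by
  apply subset_convexHull
  refine ⟨S ∩ W₁, Finset.inter_subset_right, isStable_subset Finset.inter_subset_left hS, ?_⟩
  funext w
  simp [Finset.mem_inter, w.2]

/-- with blocks `G₁`, `G₂` of the amalgam decomposition of `G` along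
`(V₁, A₁, K, A₂, V₂)`, `STAB(G)` consists of the restrictions to `V` of the vectors
`x` with `x_{G₁} ∈ STAB(G₁)`, `x_{G₂} ∈ STAB(G₂)` and `x(K) + x_{r₁} + x_{r₂} ≥ 1`. -/
theorem stmt18 (G : SimpleGraph V) (V₁ A₁ K A₂ V₂ : Finset V)
    (hpart : V₁ ∪ A₁ ∪ K ∪ A₂ ∪ V₂ = Finset.univ)
    (hdisj : ∀ X ∈ ([V₁, A₁, K, A₂, V₂] : List (Finset V)),
      ∀ Y ∈ ([V₁, A₁, K, A₂, V₂] : List (Finset V)), X ≠ Y → Disjoint X Y)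
    (hA₁ne : A₁.Nonempty) (hA₂ne : A₂.Nonempty)
    (hA₁A₂ : ∀ a ∈ A₁, ∀ b ∈ A₂, G.Adj a b)
    (hK : ∀ a ∈ K, ∀ b ∈ K, a ≠ b → G.Adj a b)
    (hKfull : ∀ k ∈ K, ∀ a ∈ A₁ ∪ A₂, G.Adj k a)
    (hV₁ : ∀ a ∈ V₁, ∀ b ∈ V₂ ∪ A₂, ¬ G.Adj a b)
    (hV₂ : ∀ a ∈ V₂, ∀ b ∈ V₁ ∪ A₁, ¬ G.Adj a b)
    (hc₁ : 2 ≤ (V₁ ∪ A₁).card) (hc₂ : 2 ≤ (V₂ ∪ A₂).card) :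
    stab G = {z : V → ℝ | ∃ x : (V ⊕ Bool) → ℝ,
      (∀ v : V, z v = x (Sum.inl v)) ∧
      MemStabOn (blockGraph G A₁ K A₂)
        ((V₁ ∪ A₁ ∪ K).image Sum.inl ∪ {Sum.inr false}) x ∧
      MemStabOn (blockGraph G A₁ K A₂)
        ((V₂ ∪ A₂ ∪ K).image Sum.inl ∪ {Sum.inr true}) x ∧
      (∑ v ∈ K, x (Sum.inl v)) + x (Sum.inr false) + x (Sum.inr true) ≥ 1} := by
  classical
  set H := blockGraph G A₁ K A₂ with hH
  set W₁ : Finset (V ⊕ Bool) := (V₁ ∪ A₁ ∪ K).image Sum.inl ∪ {Sum.inr false} with hW₁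
  set W₂ : Finset (V ⊕ Bool) := (V₂ ∪ A₂ ∪ K).image Sum.inl ∪ {Sum.inr true} with hW₂
  apply Set.Subset.antisymm
  · -- ⊆ direction
    rw [stab]
    apply convexHull_min
    · rintro p ⟨S, hS, rfl⟩
      -- construct the lift x as the indicator of a stable set S' of the block graph
      by_cases hSK : (S ∩ K).Nonempty
      · -- a vertex of K is used
        refine ⟨fun w => if w ∈ S.image Sum.inl then (1:ℝ) else 0,
          fun v => by by_cases h : v ∈ S <;> simp [h], memStabOn_indicator _ _ _ ?_, memStabOn_indicator _ _ _ ?_, ?_⟩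
        · intro a ha b hb hadj
          obtain ⟨a₀, ha₀, rfl⟩ := Finset.mem_image.mp ha
          obtain ⟨b₀, hb₀, rfl⟩ := Finset.mem_image.mp hb
          exact hS a₀ ha₀ b₀ hb₀ (bg_adj_inl.mp hadj)
        · intro a ha b hb hadj
          obtain ⟨a₀, ha₀, rfl⟩ := Finset.mem_image.mp ha
          obtain ⟨b₀, hb₀, rfl⟩ := Finset.mem_image.mp hb
          exact hS a₀ ha₀ b₀ hb₀ (bg_adj_inl.mp hadj)
        · obtain ⟨k, hk⟩ := hSK
          rw [Finset.mem_inter] at hk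
          have h1 : (1:ℝ) ≤ ∑ v ∈ K,
              (if (Sum.inl v : V ⊕ Bool) ∈ S.image Sum.inl then (1:ℝ) else 0) := by
            have := Finset.single_le_sum
              (f := fun v => if (Sum.inl v : V ⊕ Bool) ∈ S.image Sum.inl then (1:ℝ) else 0)
              (fun i _ => by positivity) hk.2
            rw [if_pos (Finset.mem_image.mpr ⟨k, hk.1, rfl⟩)] at this
            exact this
          have h2 : (Sum.inr false : V ⊕ Bool) ∉ S.image Sum.inl := by simp
          have h3 : (Sum.inr true : V ⊕ Bool) ∉ S.image Sum.inl := by simp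
          simp only [if_neg h2, if_neg h3, ge_iff_le]
          linarith
      · -- no vertex of K is used
        have hSKe : S ∩ K = ∅ := Finset.not_nonempty_iff_eq_empty.mp hSK
        -- decide which of r₁, r₂ can be added
        have hA12 : ¬ ((S ∩ A₁).Nonempty ∧ (S ∩ A₂).Nonempty) := by
          rintro ⟨⟨a, ha⟩, ⟨b, hb⟩⟩
          rw [Finset.mem_inter] at ha hb
          exact hS a ha.1 b hb.1 (hA₁A₂ a ha.2 b hb.2)
        set S' : Finset (V ⊕ Bool) := S.image Sum.inl ∪
            ((if (S ∩ A₁) = ∅ then {Sum.inr false} else ∅) ∪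
             (if (S ∩ A₂) = ∅ then {Sum.inr true} else ∅)) with hS'
        have hmem : ∀ c ∈ S', (∃ c₀ ∈ S, c = Sum.inl c₀) ∨
            (c = Sum.inr false ∧ (S ∩ A₁) = ∅) ∨ (c = Sum.inr true ∧ (S ∩ A₂) = ∅) := by
          intro c hc
          rw [hS', Finset.mem_union, Finset.mem_union] at hc
          rcases hc with hc | hc | hc
          · obtain ⟨c₀, hc₀, rfl⟩ := Finset.mem_image.mp hc
            exact Or.inl ⟨c₀, hc₀, rfl⟩
          · by_cases h : (S ∩ A₁) = ∅
            · rw [if_pos h, Finset.mem_singleton] at hc; exact Or.inr (Or.inl ⟨hc, h⟩)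
            · rw [if_neg h] at hc; exact absurd hc (Finset.notMem_empty c)
          · by_cases h : (S ∩ A₂) = ∅
            · rw [if_pos h, Finset.mem_singleton] at hc; exact Or.inr (Or.inr ⟨hc, h⟩)
            · rw [if_neg h] at hc; exact absurd hc (Finset.notMem_empty c)
        have hstab : IsStable H S' := by
          intro a ha b hb hadj
          have hmema := hmem a ha
          have hmemb := hmem b hb
          have hside : ∀ c₀ ∈ S, ∀ (bb : Bool), ((bb = false ∧ (S ∩ A₁) = ∅) ∨
              (bb = true ∧ (S ∩ A₂) = ∅)) → ¬ H.Adj (Sum.inl c₀) (Sum.inr bb) := by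
            intro c₀ hc₀ bb hbb hadj'
            rcases bg_adj_inl_inr.mp hadj' with ⟨rfl, hc⟩ | ⟨rfl, hc⟩ <;>
              rcases Finset.mem_union.mp hc with hc | hc
            · rcases hbb with ⟨-, hA⟩ | ⟨h, -⟩
              · exact Finset.notMem_empty c₀ (hA ▸ Finset.mem_inter.mpr ⟨hc₀, hc⟩)
              · simp at h
            · exact Finset.notMem_empty c₀ (hSKe ▸ Finset.mem_inter.mpr ⟨hc₀, hc⟩)
            · rcases hbb with ⟨h, -⟩ | ⟨-, hA⟩
              · simp at h
              · exact Finset.notMem_empty c₀ (hA ▸ Finset.mem_inter.mpr ⟨hc₀, hc⟩)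
            · exact Finset.notMem_empty c₀ (hSKe ▸ Finset.mem_inter.mpr ⟨hc₀, hc⟩)
          rcases hmema with ⟨a₀, ha₀, rfl⟩ | ha' <;> rcases hmemb with ⟨b₀, hb₀, rfl⟩ | hb'
          · exact hS a₀ ha₀ b₀ hb₀ (bg_adj_inl.mp hadj)
          · rcases hb' with ⟨rfl, h⟩ | ⟨rfl, h⟩
            · exact hside a₀ ha₀ false (Or.inl ⟨rfl, h⟩) hadj
            · exact hside a₀ ha₀ true (Or.inr ⟨rfl, h⟩) hadj
          · rcases ha' with ⟨rfl, h⟩ | ⟨rfl, h⟩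
            · exact hside b₀ hb₀ false (Or.inl ⟨rfl, h⟩) hadj.symm
            · exact hside b₀ hb₀ true (Or.inr ⟨rfl, h⟩) hadj.symm
          · rcases ha' with ⟨rfl, -⟩ | ⟨rfl, -⟩ <;> rcases hb' with ⟨rfl, -⟩ | ⟨rfl, -⟩ <;>
              exact bg_not_adj_inr hadj
        refine ⟨fun w => if w ∈ S' then (1:ℝ) else 0, fun v => ?_,
          memStabOn_indicator _ _ _ hstab, memStabOn_indicator _ _ _ hstab, ?_⟩
        · have hiff : (Sum.inl v : V ⊕ Bool) ∈ S' ↔ v ∈ S := by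
            constructor
            · intro h
              rcases hmem _ h with ⟨c₀, hc₀, hcc⟩ | ⟨h1, -⟩ | ⟨h1, -⟩
              · obtain rfl : v = c₀ := Sum.inl.inj hcc
                exact hc₀
              · exact absurd h1 (by simp)
              · exact absurd h1 (by simp)
            · intro h
              exact Finset.mem_union_left _ (Finset.mem_image_of_mem _ h)
          beta_reduce
          by_cases h : v ∈ S <;> simp [hiff, h]
        · -- the constraint
          have hge : ∀ w : V ⊕ Bool, (0:ℝ) ≤ if w ∈ S' then 1 else 0 := fun w => by positivity
          have hsum : (0:ℝ) ≤ ∑ v ∈ K, if Sum.inl v ∈ S' then (1:ℝ) else 0 :=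
            Finset.sum_nonneg fun v _ => hge _
          by_cases hA1 : (S ∩ A₁) = ∅
          · have : Sum.inr false ∈ S' := by
              rw [hS']
              refine Finset.mem_union_right _ (Finset.mem_union_left _ ?_)
              rw [if_pos hA1]; exact Finset.mem_singleton_self _
            rw [ge_iff_le]
            beta_reduce
            rw [if_pos this]
            have := hge (Sum.inr true)
            linarith
          · have hA2 : (S ∩ A₂) = ∅ := by
              by_contra h2
              exact hA12 ⟨Finset.nonempty_iff_ne_empty.mpr hA1,
                Finset.nonempty_iff_ne_empty.mpr h2⟩
            have : Sum.inr true ∈ S' := by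
              rw [hS']
              refine Finset.mem_union_right _ (Finset.mem_union_right _ ?_)
              rw [if_pos hA2]; exact Finset.mem_singleton_self _
            rw [ge_iff_le]
            beta_reduce
            rw [if_pos this]
            have := hge (Sum.inr false)
            linarith
    · -- convexity of the right-hand side
      have himg : {z : V → ℝ | ∃ x : (V ⊕ Bool) → ℝ,
          (∀ v : V, z v = x (Sum.inl v)) ∧ MemStabOn H W₁ x ∧ MemStabOn H W₂ x ∧
          (∑ v ∈ K, x (Sum.inl v)) + x (Sum.inr false) + x (Sum.inr true) ≥ 1}
          = (fun (x : (V ⊕ Bool) → ℝ) => fun v => x (Sum.inl v)) ''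
            ({x | MemStabOn H W₁ x} ∩ {x | MemStabOn H W₂ x} ∩
             {x | (1:ℝ) ≤ (∑ v ∈ K, x (Sum.inl v)) + x (Sum.inr false) + x (Sum.inr true)}) := by
        ext z
        simp only [Set.mem_image, Set.mem_inter_iff, Set.mem_setOf_eq, ge_iff_le]
        constructor
        · rintro ⟨x, hzx, h1, h2, h3⟩
          exact ⟨x, ⟨⟨h1, h2⟩, h3⟩, funext fun v => (hzx v).symm⟩
        · rintro ⟨x, ⟨⟨h1, h2⟩, h3⟩, rfl⟩
          exact ⟨x, fun v => rfl, h1, h2, h3⟩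
      rw [himg]
      apply Convex.is_linear_image
      · refine (Convex.inter (Convex.inter ?_ ?_) ?_)
        · have : {x : (V ⊕ Bool) → ℝ | MemStabOn H W₁ x}
              = (fun (x : (V ⊕ Bool) → ℝ) => fun w : {w // w ∈ W₁} => x w.1) ⁻¹'
                (convexHull ℝ {z : {w // w ∈ W₁} → ℝ | ∃ S : Finset (V ⊕ Bool), S ⊆ W₁ ∧
                  IsStable H S ∧ z = fun w => if w.1 ∈ S then (1 : ℝ) else 0}) := rfl
          rw [this]
          exact (convex_convexHull ℝ _).is_linear_preimage ⟨fun _ _ => rfl, fun _ _ => rfl⟩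
        · have : {x : (V ⊕ Bool) → ℝ | MemStabOn H W₂ x}
              = (fun (x : (V ⊕ Bool) → ℝ) => fun w : {w // w ∈ W₂} => x w.1) ⁻¹'
                (convexHull ℝ {z : {w // w ∈ W₂} → ℝ | ∃ S : Finset (V ⊕ Bool), S ⊆ W₂ ∧
                  IsStable H S ∧ z = fun w => if w.1 ∈ S then (1 : ℝ) else 0}) := rfl
          rw [this]
          exact (convex_convexHull ℝ _).is_linear_preimage ⟨fun _ _ => rfl, fun _ _ => rfl⟩
        · refine convex_halfSpace_ge ⟨fun a b => ?_, fun c a => ?_⟩ 1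
          · simp only [Pi.add_apply, Finset.sum_add_distrib]; ring
          · simp only [Pi.smul_apply, smul_eq_mul, ← Finset.mul_sum]; ring
      · exact ⟨fun _ _ => rfl, fun _ _ => rfl⟩
  · -- ⊇ direction
    rintro z ⟨x, hzx, h1, h2, hineq⟩
    obtain ⟨ι₁, t₁, lam, S, hlam0, hlam1, hSsub, hSst, hxeq1⟩ := memStabOn_elim H W₁ x h1
    obtain ⟨ι₂, t₂, mu, T, hmu0, hmu1, hTsub, hTst, hxeq2⟩ := memStabOn_elim H W₂ x h2
    -- basic membership facts
    have hr₁W : (Sum.inr false : V ⊕ Bool) ∈ W₁ :=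
      Finset.mem_union_right _ (Finset.mem_singleton_self _)
    have hr₂W : (Sum.inr true : V ⊕ Bool) ∈ W₂ :=
      Finset.mem_union_right _ (Finset.mem_singleton_self _)
    have hinlW₁ : ∀ v ∈ V₁ ∪ A₁ ∪ K, (Sum.inl v : V ⊕ Bool) ∈ W₁ :=
      fun v hv => Finset.mem_union_left _ (Finset.mem_image_of_mem _ hv)
    have hinlW₂ : ∀ v ∈ V₂ ∪ A₂ ∪ K, (Sum.inl v : V ⊕ Bool) ∈ W₂ :=
      fun v hv => Finset.mem_union_left _ (Finset.mem_image_of_mem _ hv)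
    have hKW₁ : ∀ k ∈ K, (Sum.inl k : V ⊕ Bool) ∈ W₁ :=
      fun k hk => hinlW₁ k (Finset.mem_union_right _ hk)
    have hKW₂ : ∀ k ∈ K, (Sum.inl k : V ⊕ Bool) ∈ W₂ :=
      fun k hk => hinlW₂ k (Finset.mem_union_right _ hk)
    have hSv : ∀ i ∈ t₁, ∀ v : V, Sum.inl v ∈ S i → v ∈ V₁ ∪ A₁ ∪ K := by
      intro i hi v hv
      have := hSsub i hi hv
      rcases Finset.mem_union.mp this with h | h
      · obtain ⟨v', hv', hvv⟩ := Finset.mem_image.mp h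
        obtain rfl : v' = v := Sum.inl.inj hvv
        exact hv'
      · exact absurd (Finset.mem_singleton.mp h) (by simp)
    have hTv : ∀ j ∈ t₂, ∀ v : V, Sum.inl v ∈ T j → v ∈ V₂ ∪ A₂ ∪ K := by
      intro j hj v hv
      have := hTsub j hj hv
      rcases Finset.mem_union.mp this with h | h
      · obtain ⟨v', hv', hvv⟩ := Finset.mem_image.mp h
        obtain rfl : v' = v := Sum.inl.inj hvv
        exact hv'
      · exact absurd (Finset.mem_singleton.mp h) (by simp)
    -- the K-intersections
    set KS : ι₁ → Finset V := fun i => K.filter (fun k => (Sum.inl k : V ⊕ Bool) ∈ S i) with hKSd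
    set KT : ι₂ → Finset V := fun j => K.filter (fun k => (Sum.inl k : V ⊕ Bool) ∈ T j) with hKTd
    have hKSmem : ∀ i k, k ∈ KS i ↔ (k ∈ K ∧ Sum.inl k ∈ S i) := by
      intro i k; rw [hKSd]; exact Finset.mem_filter
    have hKTmem : ∀ j k, k ∈ KT j ↔ (k ∈ K ∧ Sum.inl k ∈ T j) := by
      intro j k; rw [hKTd]; exact Finset.mem_filter
    have hKScard : ∀ i ∈ t₁, (KS i).card ≤ 1 := by
      intro i hi
      by_contra hgt
      push_neg at hgt
      obtain ⟨a, ha, b, hb, hab⟩ := Finset.one_lt_card.mp hgt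
      rw [hKSmem] at ha hb
      exact hSst i hi _ ha.2 _ hb.2 (bg_adj_inl.mpr (hK a ha.1 b hb.1 hab))
    have hKTcard : ∀ j ∈ t₂, (KT j).card ≤ 1 := by
      intro j hj
      by_contra hgt
      push_neg at hgt
      obtain ⟨a, ha, b, hb, hab⟩ := Finset.one_lt_card.mp hgt
      rw [hKTmem] at ha hb
      exact hTst j hj _ ha.2 _ hb.2 (bg_adj_inl.mpr (hK a ha.1 b hb.1 hab))
    have hKSr : ∀ i ∈ t₁, (Sum.inr false : V ⊕ Bool) ∈ S i → KS i = ∅ := by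
      intro i hi hr
      rw [Finset.eq_empty_iff_forall_notMem]
      intro k hk
      rw [hKSmem] at hk
      exact hSst i hi _ hk.2 _ hr
        (bg_adj_inl_inr.mpr (Or.inl ⟨rfl, Finset.mem_union_right _ hk.1⟩))
    have hKTr : ∀ j ∈ t₂, (Sum.inr true : V ⊕ Bool) ∈ T j → KT j = ∅ := by
      intro j hj hr
      rw [Finset.eq_empty_iff_forall_notMem]
      intro k hk
      rw [hKTmem] at hk
      exact hTst j hj _ hk.2 _ hr
        (bg_adj_inl_inr.mpr (Or.inr ⟨rfl, Finset.mem_union_right _ hk.1⟩))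
    -- scalar quantities
    set xK : ℝ := ∑ k ∈ K, x (Sum.inl k) with hxKd
    set ρ₁ : ℝ := x (Sum.inr false) with hρ₁d
    set ρ₂ : ℝ := x (Sum.inr true) with hρ₂d
    set p1 : ℝ := ∑ i ∈ t₁,
      if (Sum.inr false : V ⊕ Bool) ∉ S i ∧ KS i = ∅ then lam i else 0 with hp1d
    set p2 : ℝ := ∑ j ∈ t₂,
      if (Sum.inr true : V ⊕ Bool) ∉ T j ∧ KT j = ∅ then mu j else 0 with hp2d
    have hρ₁s : ρ₁ = ∑ i ∈ t₁, if (Sum.inr false : V ⊕ Bool) ∈ S i then lam i else 0 :=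
      hxeq1 _ hr₁W
    have hρ₂s : ρ₂ = ∑ j ∈ t₂, if (Sum.inr true : V ⊕ Bool) ∈ T j then mu j else 0 :=
      hxeq2 _ hr₂W
    have hE₁ : xK + p1 + ρ₁ = 1 := by
      have hxKs : xK = ∑ i ∈ t₁, ((KS i).card : ℝ) * lam i := by
        rw [hxKd]
        rw [Finset.sum_congr rfl (fun k hk => hxeq1 _ (hKW₁ k hk))]
        rw [Finset.sum_comm]
        refine Finset.sum_congr rfl fun i hi => ?_
        rw [← Finset.sum_filter, Finset.sum_const, nsmul_eq_mul]
      rw [hxKs, hp1d, hρ₁s, ← Finset.sum_add_distrib, ← Finset.sum_add_distrib, ← hlam1]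
      refine Finset.sum_congr rfl fun i hi => ?_
      by_cases hr : (Sum.inr false : V ⊕ Bool) ∈ S i
      · rw [hKSr i hi hr]
        simp [hr]
      · by_cases hKSi : KS i = ∅
        · simp [hr, hKSi]
        · have h1 : (KS i).card = 1 := le_antisymm (hKScard i hi)
            (Finset.card_pos.mpr (Finset.nonempty_iff_ne_empty.mpr hKSi))
        
          simp [hr, hKSi, h1]
    have hE₂ : xK + p2 + ρ₂ = 1 := by
      have hxKs : xK = ∑ j ∈ t₂, ((KT j).card : ℝ) * mu j := by
        rw [hxKd]
        rw [Finset.sum_congr rfl (fun k hk => hxeq2 _ (hKW₂ k hk))]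
        rw [Finset.sum_comm]
        refine Finset.sum_congr rfl fun j hj => ?_
        rw [← Finset.sum_filter, Finset.sum_const, nsmul_eq_mul]
      rw [hxKs, hp2d, hρ₂s, ← Finset.sum_add_distrib, ← Finset.sum_add_distrib, ← hmu1]
      refine Finset.sum_congr rfl fun j hj => ?_
      by_cases hr : (Sum.inr true : V ⊕ Bool) ∈ T j
      · rw [hKTr j hj hr]
        simp [hr]
      · by_cases hKTj : KT j = ∅
        · simp [hr, hKTj]
        · have h1 : (KT j).card = 1 := le_antisymm (hKTcard j hj)
            (Finset.card_pos.mpr (Finset.nonempty_iff_ne_empty.mpr hKTj))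
          simp [hr, hKTj, h1]
    have hkey : 1 ≤ xK + ρ₁ + ρ₂ := hineq
    have hρ₁0 : 0 ≤ ρ₁ := by
      rw [hρ₁s]
      exact Finset.sum_nonneg fun i hi => by split; exacts [hlam0 i hi, le_rfl]
    have hρ₂0 : 0 ≤ ρ₂ := by
      rw [hρ₂s]
      exact Finset.sum_nonneg fun j hj => by split; exacts [hmu0 j hj, le_rfl]
    have hp10 : 0 ≤ p1 := by
      rw [hp1d]
      exact Finset.sum_nonneg fun i hi => by split; exacts [hlam0 i hi, le_rfl]
    have hp20 : 0 ≤ p2 := by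
      rw [hp2d]
      exact Finset.sum_nonneg fun j hj => by split; exacts [hmu0 j hj, le_rfl]
    have hp1ρ₂ : p1 ≤ ρ₂ := by linarith
    have hp2ρ₁ : p2 ≤ ρ₁ := by linarith
    -- splitting fractions
    set c₁ : ℝ := if ρ₁ = 0 then 0 else p2 / ρ₁ with hc₁d
    set c₂ : ℝ := if ρ₂ = 0 then 0 else p1 / ρ₂ with hc₂d
    have hc₁0 : 0 ≤ c₁ := by
      rw [hc₁d]; split
      · exact le_rfl
      · exact div_nonneg hp20 hρ₁0
    have hc₂0 : 0 ≤ c₂ := by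
      rw [hc₂d]; split
      · exact le_rfl
      · exact div_nonneg hp10 hρ₂0
    have hc₁1 : c₁ ≤ 1 := by
      rw [hc₁d]; split
      · norm_num
      · rename_i h
        rw [div_le_one (lt_of_le_of_ne hρ₁0 (Ne.symm h))]
        exact hp2ρ₁
    have hc₂1 : c₂ ≤ 1 := by
      rw [hc₂d]; split
      · norm_num
      · rename_i h
        rw [div_le_one (lt_of_le_of_ne hρ₂0 (Ne.symm h))]
        exact hp1ρ₂
    have hρc₁ : ρ₁ * c₁ = p2 := by
      rw [hc₁d]; split
      · rename_i h
        rw [h] at hp2ρ₁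
        have : p2 = 0 := le_antisymm hp2ρ₁ hp20
        rw [this, h]; ring
      · rename_i h
        field_simp
    have hρc₂ : ρ₂ * c₂ = p1 := by
      rw [hc₂d]; split
      · rename_i h
        rw [h] at hp1ρ₂
        have : p1 = 0 := le_antisymm hp1ρ₂ hp10
        rw [this, h]; ring
      · rename_i h
        field_simp
    -- group labels and split weights
    set g1 : ι₁ × Bool → Finset V ⊕ Bool := fun p =>
      if (Sum.inr false : V ⊕ Bool) ∈ S p.1 then Sum.inr p.2 else Sum.inl (KS p.1) with hg1d
    set lam' : ι₁ × Bool → ℝ := fun p =>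
      if (Sum.inr false : V ⊕ Bool) ∈ S p.1 then
        (if p.2 then lam p.1 * c₁ else lam p.1 * (1 - c₁))
      else (if p.2 then lam p.1 else 0) with hlam'd
    set g2 : ι₂ × Bool → Finset V ⊕ Bool := fun q =>
      if (Sum.inr true : V ⊕ Bool) ∈ T q.1 then
        (if q.2 then Sum.inl (∅ : Finset V) else Sum.inr false)
      else (if KT q.1 = ∅ then Sum.inr true else Sum.inl (KT q.1)) with hg2d
    set mu' : ι₂ × Bool → ℝ := fun q =>
      if (Sum.inr true : V ⊕ Bool) ∈ T q.1 then
        (if q.2 then mu q.1 * c₂ else mu q.1 * (1 - c₂))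
      else (if q.2 then mu q.1 else 0) with hmu'd
    have hlam'0 : ∀ p ∈ t₁ ×ˢ (Finset.univ : Finset Bool), 0 ≤ lam' p := by
      rintro ⟨i, b⟩ hp
      have hi : i ∈ t₁ := (Finset.mem_product.mp hp).1
      have h0 := hlam0 i hi
      rw [hlam'd]
      dsimp only
      split
      · split
        · exact mul_nonneg h0 hc₁0
        · exact mul_nonneg h0 (by linarith)
      · split
        · exact h0
        · exact le_rfl
    have hmu'0 : ∀ q ∈ t₂ ×ˢ (Finset.univ : Finset Bool), 0 ≤ mu' q := by
      rintro ⟨j, b⟩ hq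
      have hj : j ∈ t₂ := (Finset.mem_product.mp hq).1
      have h0 := hmu0 j hj
      rw [hmu'd]
      dsimp only
      split
      · split
        · exact mul_nonneg h0 hc₂0
        · exact mul_nonneg h0 (by linarith)
      · split
        · exact h0
        · exact le_rfl
    have hlam'pair : ∀ i ∈ t₁, lam' (i, true) + lam' (i, false) = lam i := by
      intro i hi
      rw [hlam'd]
      by_cases hr : (Sum.inr false : V ⊕ Bool) ∈ S i <;> simp [hr] <;> ring
    have hmu'pair : ∀ j ∈ t₂, mu' (j, true) + mu' (j, false) = mu j := by
      intro j hj
      rw [hmu'd]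
      by_cases hr : (Sum.inr true : V ⊕ Bool) ∈ T j <;> simp [hr] <;> ring
    -- equality of group masses
    have hm1 : ∀ γ : Finset V ⊕ Bool,
        (∑ p ∈ t₁ ×ˢ (Finset.univ : Finset Bool), if g1 p = γ then lam' p else 0)
        = ∑ q ∈ t₂ ×ˢ (Finset.univ : Finset Bool), if g2 q = γ then mu' q else 0 := by
      intro γ
      rw [Finset.sum_product, Finset.sum_product]
      simp only [Fintype.sum_bool]
      rcases γ with κ | b
      · by_cases hκ : κ = ∅
        · subst hκ
          trans p1
          · rw [hp1d]
            refine Finset.sum_congr rfl fun i hi => ?_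
            by_cases hr : (Sum.inr false : V ⊕ Bool) ∈ S i
            · simp [hg1d, hlam'd, hr]
            · by_cases hKSi : KS i = ∅ <;> simp [hg1d, hlam'd, hr, hKSi]
          · rw [← hρc₂, hρ₂s, Finset.sum_mul]
            refine Finset.sum_congr rfl fun j hj => ?_
            by_cases hr : (Sum.inr true : V ⊕ Bool) ∈ T j
            · simp [hg2d, hmu'd, hr]
            · by_cases hKTj : KT j = ∅ <;> simp [hg2d, hmu'd, hr, hKTj]
        · trans (∑ i ∈ t₁, if KS i = κ then lam i else 0)
          · refine Finset.sum_congr rfl fun i hi => ?_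
            by_cases hr : (Sum.inr false : V ⊕ Bool) ∈ S i
            · have h0 : KS i = ∅ := hKSr i hi hr
              simp [hg1d, hlam'd, hr, h0, Ne.symm hκ]
            · simp [hg1d, hlam'd, hr]
          · by_cases hsing : ∃ k ∈ K, κ = {k}
            · obtain ⟨k, hkK, rfl⟩ := hsing
              have hSiff : ∀ i ∈ t₁, (KS i = {k}) = ((Sum.inl k : V ⊕ Bool) ∈ S i) := by
                intro i hi
                apply propext
                constructor
                · intro h
                  have : k ∈ KS i := h ▸ Finset.mem_singleton_self k
                  exact ((hKSmem i k).mp this).2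
                · intro h
                  have hkmem : k ∈ KS i := (hKSmem i k).mpr ⟨hkK, h⟩
                  exact Finset.eq_singleton_iff_unique_mem.mpr
                    ⟨hkmem, fun y hy => Finset.card_le_one.mp (hKScard i hi) y hy k hkmem⟩
              have hTiff : ∀ j ∈ t₂, (KT j = {k}) = ((Sum.inl k : V ⊕ Bool) ∈ T j) := by
                intro j hj
                apply propext
                constructor
                · intro h
                  have : k ∈ KT j := h ▸ Finset.mem_singleton_self k
                  exact ((hKTmem j k).mp this).2
                · intro h
                  have hkmem : k ∈ KT j := (hKTmem j k).mpr ⟨hkK, h⟩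
                  exact Finset.eq_singleton_iff_unique_mem.mpr
                    ⟨hkmem, fun y hy => Finset.card_le_one.mp (hKTcard j hj) y hy k hkmem⟩
              trans (x (Sum.inl k))
              · rw [hxeq1 _ (hKW₁ k hkK)]
                exact Finset.sum_congr rfl fun i hi => by simp only [hSiff i hi]
              · rw [hxeq2 _ (hKW₂ k hkK)]
                refine Finset.sum_congr rfl fun j hj => ?_
                by_cases hr : (Sum.inr true : V ⊕ Bool) ∈ T j
                · have h0 : KT j = ∅ := hKTr j hj hr
                  have hnotin : (Sum.inl k : V ⊕ Bool) ∉ T j := by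
                    intro hcon
                    have : k ∈ KT j := (hKTmem j k).mpr ⟨hkK, hcon⟩
                    rw [h0] at this
                    exact Finset.notMem_empty k this
                  simp [hg2d, hmu'd, hr, hnotin, (Finset.singleton_ne_empty k).symm]
                · by_cases hKTj : KT j = ∅
                  · have hnotin : (Sum.inl k : V ⊕ Bool) ∉ T j := by
                      intro hcon
                      have : k ∈ KT j := (hKTmem j k).mpr ⟨hkK, hcon⟩
                      rw [hKTj] at this
                      exact Finset.notMem_empty k this
                    simp [hg2d, hmu'd, hr, hKTj, hnotin]
                  · simp only [hg2d, hmu'd, ← hTiff j hj]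
                    simp [hr, hKTj]
            · trans (0 : ℝ)
              · apply Finset.sum_eq_zero
                intro i hi
                rw [if_neg]
                intro hc
                have hKSne : KS i ≠ ∅ := by rw [hc]; exact hκ
                have hcard : (KS i).card = 1 := le_antisymm (hKScard i hi)
                  (Finset.card_pos.mpr (Finset.nonempty_iff_ne_empty.mpr hKSne))
                obtain ⟨a, ha⟩ := Finset.card_eq_one.mp hcard
                have haK : a ∈ K := ((hKSmem i a).mp (ha ▸ Finset.mem_singleton_self a)).1
                exact hsing ⟨a, haK, by rw [← hc, ha]⟩
              · symm
                apply Finset.sum_eq_zero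
                intro j hj
                by_cases hr : (Sum.inr true : V ⊕ Bool) ∈ T j
                · simp [hg2d, hmu'd, hr, Ne.symm hκ]
                · by_cases hKTj : KT j = ∅
                  · simp [hg2d, hmu'd, hr, hKTj]
                  · have hno : ¬ (KT j = κ) := by
                      intro hc
                      have hcard : (KT j).card = 1 := le_antisymm (hKTcard j hj)
                        (Finset.card_pos.mpr (Finset.nonempty_iff_ne_empty.mpr hKTj))
                      obtain ⟨a, ha⟩ := Finset.card_eq_one.mp hcard
                      have haK : a ∈ K := ((hKTmem j a).mp (ha ▸ Finset.mem_singleton_self a)).1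
                      exact hsing ⟨a, haK, by rw [← hc, ha]⟩
                    simp [hg2d, hmu'd, hr, hKTj, hno]
      · cases b
        · -- group B : leftovers of r₁ matched with leftovers of r₂
          trans (ρ₁ * (1 - c₁))
          · rw [hρ₁s, Finset.sum_mul]
            refine Finset.sum_congr rfl fun i hi => ?_
            by_cases hr : (Sum.inr false : V ⊕ Bool) ∈ S i <;> simp [hg1d, hlam'd, hr]
          · trans (ρ₂ * (1 - c₂))
            · have e1 : ρ₁ * (1 - c₁) = ρ₁ - p2 := by rw [mul_sub, mul_one, hρc₁]
              have e2 : ρ₂ * (1 - c₂) = ρ₂ - p1 := by rw [mul_sub, mul_one, hρc₂]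
              rw [e1, e2]; linarith
            · rw [hρ₂s, Finset.sum_mul]
              refine Finset.sum_congr rfl fun j hj => ?_
              by_cases hr : (Sum.inr true : V ⊕ Bool) ∈ T j
              · simp [hg2d, hmu'd, hr]
              · by_cases hKTj : KT j = ∅ <;> simp [hg2d, hmu'd, hr, hKTj]
        · -- group C : part of r₁ matched with P²
          trans p2
          · rw [← hρc₁, hρ₁s, Finset.sum_mul]
            refine Finset.sum_congr rfl fun i hi => ?_
            by_cases hr : (Sum.inr false : V ⊕ Bool) ∈ S i <;> simp [hg1d, hlam'd, hr]
          · rw [hp2d]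
            refine Finset.sum_congr rfl fun j hj => ?_
            by_cases hr : (Sum.inr true : V ⊕ Bool) ∈ T j
            · simp [hg2d, hmu'd, hr]
            · by_cases hKTj : KT j = ∅ <;> simp [hg2d, hmu'd, hr, hKTj]
    -- the coupling
    set pi : ι₁ × Bool → ι₂ × Bool → ℝ := fun p q =>
      if g1 p = g2 q then lam' p * mu' q /
        (∑ p' ∈ t₁ ×ˢ (Finset.univ : Finset Bool), if g1 p' = g1 p then lam' p' else 0)
      else 0 with hpid
    have hmarg1 : ∀ p ∈ t₁ ×ˢ (Finset.univ : Finset Bool),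
        ∑ q ∈ t₂ ×ˢ (Finset.univ : Finset Bool), pi p q = lam' p := by
      intro p hp
      exact coupling_marg1 _ _ lam' mu' g1 g2 hlam'0 hm1 hp
    have hmarg2 : ∀ q ∈ t₂ ×ˢ (Finset.univ : Finset Bool),
        ∑ p ∈ t₁ ×ˢ (Finset.univ : Finset Bool), pi p q = mu' q := by
      intro q hq
      exact coupling_marg2 _ _ lam' mu' g1 g2 hmu'0 hm1 hq
    have hpinn : ∀ p ∈ t₁ ×ˢ (Finset.univ : Finset Bool),
        ∀ q ∈ t₂ ×ˢ (Finset.univ : Finset Bool), 0 ≤ pi p q := by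
      intro p hp q hq
      simp only [hpid]
      split
      · refine div_nonneg (mul_nonneg (hlam'0 p hp) (hmu'0 q hq)) ?_
        exact Finset.sum_nonneg fun p' hp' => by split; exacts [hlam'0 p' hp', le_rfl]
      · exact le_rfl
    have hpisupp : ∀ p q, pi p q ≠ 0 → g1 p = g2 q := by
      intro p q hne
      simp only [hpid] at hne
      by_cases h : g1 p = g2 q
      · exact h
      · rw [if_neg h] at hne; exact absurd rfl hne
    -- label extraction facts
    have hg1inr : ∀ p : ι₁ × Bool, ∀ b : Bool, g1 p = Sum.inr b →
        (Sum.inr false : V ⊕ Bool) ∈ S p.1 := by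
      intro p b h
      simp only [hg1d] at h
      by_cases hr : (Sum.inr false : V ⊕ Bool) ∈ S p.1
      · exact hr
      · rw [if_neg hr] at h; exact absurd h (by simp)
    have hg2inlemp : ∀ q : ι₂ × Bool, g2 q = Sum.inl (∅ : Finset V) →
        (Sum.inr true : V ⊕ Bool) ∈ T q.1 := by
      intro q h
      simp only [hg2d] at h
      by_cases hr : (Sum.inr true : V ⊕ Bool) ∈ T q.1
      · exact hr
      · rw [if_neg hr] at h
        by_cases hk : KT q.1 = ∅
        · rw [if_pos hk] at h; exact absurd h (by simp)
        · rw [if_neg hk] at h; exact absurd (Sum.inl.inj h) hk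
    have hg2inlne : ∀ q : ι₂ × Bool, ∀ κ : Finset V, κ ≠ ∅ → g2 q = Sum.inl κ →
        (Sum.inr true : V ⊕ Bool) ∉ T q.1 ∧ KT q.1 = κ := by
      intro q κ hκ h
      simp only [hg2d] at h
      by_cases hr : (Sum.inr true : V ⊕ Bool) ∈ T q.1
      · rw [if_pos hr] at h
        exfalso
        cases hq2 : q.2
        · rw [hq2] at h; simp at h
        · rw [hq2] at h
          simp only [if_true] at h
          exact hκ (Sum.inl.inj h).symm
      · rw [if_neg hr] at h
        by_cases hk : KT q.1 = ∅
        · rw [if_pos hk] at h; exact absurd h (by simp)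
        · rw [if_neg hk] at h; exact ⟨hr, Sum.inl.inj h⟩
    have hg2inr : ∀ q : ι₂ × Bool, ∀ b : Bool, g2 q = Sum.inr b →
        ((Sum.inr true : V ⊕ Bool) ∈ T q.1 ∨ KT q.1 = ∅) := by
      intro q b h
      simp only [hg2d] at h
      by_cases hr : (Sum.inr true : V ⊕ Bool) ∈ T q.1
      · exact Or.inl hr
      · right
        by_cases hk : KT q.1 = ∅
        · exact hk
        · rw [if_neg hr, if_neg hk] at h; exact absurd h (by simp)
    -- parts of stable sets in the blocks
    have hSpartV₁ : ∀ i ∈ t₁, (Sum.inr false : V ⊕ Bool) ∈ S i →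
        ∀ w : V, Sum.inl w ∈ S i → w ∈ V₁ := by
      intro i hi hr w hw
      have hw' := hSv i hi w hw
      have hnot : w ∉ A₁ ∪ K := fun hwk =>
        hSst i hi _ hw _ hr (bg_adj_inl_inr.mpr (Or.inl ⟨rfl, hwk⟩))
      rcases Finset.mem_union.mp hw' with h | h
      · rcases Finset.mem_union.mp h with h2 | h2
        · exact h2
        · exact absurd (Finset.mem_union_left _ h2) hnot
      · exact absurd (Finset.mem_union_right _ h) hnot
    have hTpartV₂ : ∀ j ∈ t₂, (Sum.inr true : V ⊕ Bool) ∈ T j →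
        ∀ w : V, Sum.inl w ∈ T j → w ∈ V₂ := by
      intro j hj hr w hw
      have hw' := hTv j hj w hw
      have hnot : w ∉ A₂ ∪ K := fun hwk =>
        hTst j hj _ hw _ hr (bg_adj_inl_inr.mpr (Or.inr ⟨rfl, hwk⟩))
      rcases Finset.mem_union.mp hw' with h | h
      · rcases Finset.mem_union.mp h with h2 | h2
        · exact h2
        · exact absurd (Finset.mem_union_left _ h2) hnot
      · exact absurd (Finset.mem_union_right _ h) hnot
    have hSpartV₁A₁ : ∀ i ∈ t₁, KS i = ∅ → ∀ w : V, Sum.inl w ∈ S i → w ∈ V₁ ∪ A₁ := by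
      intro i hi hKSi w hw
      have hw' := hSv i hi w hw
      rcases Finset.mem_union.mp hw' with h | h
      · exact h
      · exfalso
        have : w ∈ KS i := (hKSmem i w).mpr ⟨h, hw⟩
        rw [hKSi] at this
        exact Finset.notMem_empty w this
    have hSpartV₁K : ∀ i ∈ t₁, ∀ k ∈ KS i, ∀ w : V, Sum.inl w ∈ S i →
        w ∈ V₁ ∨ w ∈ KS i := by
      intro i hi k hk w hw
      have hw' := hSv i hi w hw
      rcases Finset.mem_union.mp hw' with h | h
      · rcases Finset.mem_union.mp h with h2 | h2
        · exact Or.inl h2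
        · exfalso
          have hkK : k ∈ K := ((hKSmem i k).mp hk).1
          have hkS : Sum.inl k ∈ S i := ((hKSmem i k).mp hk).2
          exact hSst i hi _ hkS _ hw
            (bg_adj_inl.mpr (hKfull k hkK w (Finset.mem_union_left _ h2)))
      · exact Or.inr ((hKSmem i w).mpr ⟨h, hw⟩)
    have hTpartV₂K : ∀ j ∈ t₂, ∀ k ∈ KT j, ∀ w : V, Sum.inl w ∈ T j →
        w ∈ V₂ ∨ w ∈ KT j := by
      intro j hj k hk w hw
      have hw' := hTv j hj w hw
      rcases Finset.mem_union.mp hw' with h | h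
      · rcases Finset.mem_union.mp h with h2 | h2
        · exact Or.inl h2
        · exfalso
          have hkK : k ∈ K := ((hKTmem j k).mp hk).1
          have hkT : Sum.inl k ∈ T j := ((hKTmem j k).mp hk).2
          exact hTst j hj _ hkT _ hw
            (bg_adj_inl.mpr (hKfull k hkK w (Finset.mem_union_right _ h2)))
      · exact Or.inr ((hKTmem j w).mpr ⟨h, hw⟩)
    -- the glued stable sets
    set U : ι₁ → ι₂ → Finset V := fun i j => Finset.univ.filter
      (fun v => (Sum.inl v : V ⊕ Bool) ∈ S i ∨
        ((Sum.inl v : V ⊕ Bool) ∈ T j ∧ v ∉ V₁ ∪ A₁ ∪ K)) with hUd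
    have hUmem : ∀ i j (v : V), v ∈ U i j ↔ ((Sum.inl v : V ⊕ Bool) ∈ S i ∨
        ((Sum.inl v : V ⊕ Bool) ∈ T j ∧ v ∉ V₁ ∪ A₁ ∪ K)) := by
      intro i j v
      simp only [hUd]
      simp only [Finset.mem_filter, Finset.mem_univ, true_and]
    have hUstab : ∀ p ∈ t₁ ×ˢ (Finset.univ : Finset Bool),
        ∀ q ∈ t₂ ×ˢ (Finset.univ : Finset Bool),
        pi p q ≠ 0 → IsStable G (U p.1 q.1) := by
      intro p hp q hq hne
      have hg := hpisupp p q hne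
      have hi : p.1 ∈ t₁ := (Finset.mem_product.mp hp).1
      have hj : q.1 ∈ t₂ := (Finset.mem_product.mp hq).1
      have cross : ∀ a b : V, Sum.inl a ∈ S p.1 → Sum.inl b ∈ T q.1 →
          b ∉ V₁ ∪ A₁ ∪ K → ¬ G.Adj a b := by
        intro a b haS hbT hbN hadj
        have hbnK : b ∉ K := fun hbK => hbN (Finset.mem_union_right _ hbK)
        by_cases hrS : (Sum.inr false : V ⊕ Bool) ∈ S p.1
        · -- group is on the inr side
          have hgl : g1 p = Sum.inr p.2 := by simp only [hg1d]; exact if_pos hrS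
          have hcase := hg2inr q p.2 (by rw [← hg]; exact hgl)
          have haV₁ : a ∈ V₁ := hSpartV₁ _ hi hrS a haS
          have hbV : b ∈ V₂ ∪ A₂ := by
            rcases hcase with hr | hk
            · exact Finset.mem_union_left _ (hTpartV₂ _ hj hr b hbT)
            · have hb' := hTv _ hj b hbT
              rcases Finset.mem_union.mp hb' with h | h
              · exact h
              · exact absurd h hbnK
          exact hV₁ a haV₁ b hbV hadj
        · have hgl : g1 p = Sum.inl (KS p.1) := by simp only [hg1d]; exact if_neg hrS
          by_cases hKSi : KS p.1 = ∅
          · -- group A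
            have hg2v : g2 q = Sum.inl (∅ : Finset V) := by rw [← hg, hgl, hKSi]
            have hrT := hg2inlemp q hg2v
            have hbV₂ : b ∈ V₂ := hTpartV₂ _ hj hrT b hbT
            have haV : a ∈ V₁ ∪ A₁ := hSpartV₁A₁ _ hi hKSi a haS
            exact hV₂ b hbV₂ a haV hadj.symm
          · -- group of a K vertex
            have hg2v : g2 q = Sum.inl (KS p.1) := by rw [← hg, hgl]
            obtain ⟨hrT, hKTq⟩ := hg2inlne q (KS p.1) hKSi hg2v
            obtain ⟨k, hk⟩ := Finset.nonempty_iff_ne_empty.mpr hKSi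
            rcases hSpartV₁K _ hi k hk a haS with haV₁ | haK
            · rcases hTpartV₂K _ hj k (hKTq ▸ hk) b hbT with hbV₂ | hbK
              · exact hV₁ a haV₁ b (Finset.mem_union_left _ hbV₂) hadj
              · exact hbnK ((hKTmem _ b).mp hbK).1
            · have haKT : a ∈ KT q.1 := hKTq ▸ haK
              have haT : Sum.inl a ∈ T q.1 := ((hKTmem _ a).mp haKT).2
              exact hTst _ hj _ haT _ hbT (bg_adj_inl.mpr hadj)
      intro a ha b hb hadj
      rw [hUmem] at ha hb
      rcases ha with haS | ⟨haT, haN⟩ <;> rcases hb with hbS | ⟨hbT, hbN⟩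
      · exact hSst _ hi _ haS _ hbS (bg_adj_inl.mpr hadj)
      · exact cross a b haS hbT hbN hadj
      · exact cross b a hbS haT haN hadj.symm
      · exact hTst _ hj _ haT _ hbT (bg_adj_inl.mpr hadj)
    -- final assembly
    rw [stab]
    set PP := (t₁ ×ˢ (Finset.univ : Finset Bool)) ×ˢ (t₂ ×ˢ (Finset.univ : Finset Bool))
      with hPPd
    set PPf := PP.filter (fun pq => pi pq.1 pq.2 ≠ 0) with hPPfd
    have hw0 : ∀ pq ∈ PPf, 0 ≤ pi pq.1 pq.2 := by
      intro pq hpq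
      obtain ⟨hPP, -⟩ := Finset.mem_filter.mp hpq
      obtain ⟨hp, hq⟩ := Finset.mem_product.mp hPP
      exact hpinn _ hp _ hq
    have hsumPP : ∑ pq ∈ PP, pi pq.1 pq.2 = 1 := by
      rw [hPPd, Finset.sum_product]
      rw [Finset.sum_congr rfl (fun p hp => hmarg1 p hp)]
      have hper : ∀ i ∈ t₁, (∑ b ∈ (Finset.univ : Finset Bool), lam' (i, b)) = lam i := by
        intro i hi
        rw [Fintype.sum_bool]
        exact hlam'pair i hi
      rw [Finset.sum_product, Finset.sum_congr rfl hper, hlam1]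
    have hsumf : ∑ pq ∈ PPf, pi pq.1 pq.2 = 1 := by
      rw [hPPfd, Finset.sum_filter_ne_zero]
      exact hsumPP
    have hzeq : PPf.centerMass (fun pq => pi pq.1 pq.2)
        (fun pq => fun v => if v ∈ U pq.1.1 pq.2.1 then (1:ℝ) else 0) = z := by
      rw [Finset.centerMass_eq_of_sum_1 _ _ hsumf]
      funext v
      rw [Finset.sum_apply]
      simp only [Pi.smul_apply, smul_eq_mul]
      have hext : ∀ pq ∈ PP,
          (pi pq.1 pq.2 * (if v ∈ U pq.1.1 pq.2.1 then (1:ℝ) else 0)) ≠ 0 →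
          pi pq.1 pq.2 ≠ 0 := by
        intro pq _ hne h0
        apply hne
        rw [h0, zero_mul]
      rw [hPPfd, Finset.sum_filter_of_ne hext, hzx v]
      by_cases hv : v ∈ V₁ ∪ A₁ ∪ K
      · have hred : ∀ pq ∈ PP, pi pq.1 pq.2 * (if v ∈ U pq.1.1 pq.2.1 then (1:ℝ) else 0)
            = pi pq.1 pq.2 * (if (Sum.inl v : V ⊕ Bool) ∈ S pq.1.1 then 1 else 0) := by
          intro pq hpq
          congr 1
          refine if_congr ?_ rfl rfl
          rw [hUmem]
          constructor
          · rintro (h | ⟨-, hN⟩)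
            · exact h
            · exact absurd hv hN
          · exact Or.inl
        rw [Finset.sum_congr rfl hred, hPPd, Finset.sum_product]
        have hstep : ∀ p ∈ t₁ ×ˢ (Finset.univ : Finset Bool),
            (∑ q ∈ t₂ ×ˢ (Finset.univ : Finset Bool),
              pi p q * (if (Sum.inl v : V ⊕ Bool) ∈ S p.1 then (1:ℝ) else 0))
            = lam' p * (if (Sum.inl v : V ⊕ Bool) ∈ S p.1 then (1:ℝ) else 0) := by
          intro p hp
          rw [← Finset.sum_mul, hmarg1 p hp]
        rw [Finset.sum_congr rfl hstep, Finset.sum_product]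
        rw [hxeq1 _ (hinlW₁ v hv)]
        refine Finset.sum_congr rfl fun i hi => ?_
        rw [Fintype.sum_bool]
        by_cases hvS : (Sum.inl v : V ⊕ Bool) ∈ S i
        · simpa [hvS] using hlam'pair i hi
        · simp [hvS]
      · have hvw : v ∈ V₂ ∪ A₂ ∪ K := by
          have hvu : v ∈ V₁ ∪ A₁ ∪ K ∪ A₂ ∪ V₂ := hpart ▸ Finset.mem_univ v
          rcases Finset.mem_union.mp hvu with h | h
          · rcases Finset.mem_union.mp h with h2 | h2
            · exact absurd h2 hv
            · exact Finset.mem_union_left _ (Finset.mem_union_right _ h2)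
          · exact Finset.mem_union_left _ (Finset.mem_union_left _ h)
        have hred : ∀ pq ∈ PP, pi pq.1 pq.2 * (if v ∈ U pq.1.1 pq.2.1 then (1:ℝ) else 0)
            = pi pq.1 pq.2 * (if (Sum.inl v : V ⊕ Bool) ∈ T pq.2.1 then 1 else 0) := by
          intro pq hpq
          have hi : pq.1.1 ∈ t₁ := (Finset.mem_product.mp (Finset.mem_product.mp hpq).1).1
          congr 1
          refine if_congr ?_ rfl rfl
          rw [hUmem]
          constructor
          · rintro (h | ⟨h, -⟩)
            · exact absurd (hSv _ hi v h) hv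
            · exact h
          · intro h
            exact Or.inr ⟨h, hv⟩
        rw [Finset.sum_congr rfl hred, hPPd, Finset.sum_product]
        rw [Finset.sum_comm]
        have hstep : ∀ q ∈ t₂ ×ˢ (Finset.univ : Finset Bool),
            (∑ p ∈ t₁ ×ˢ (Finset.univ : Finset Bool),
              pi p q * (if (Sum.inl v : V ⊕ Bool) ∈ T q.1 then (1:ℝ) else 0))
            = mu' q * (if (Sum.inl v : V ⊕ Bool) ∈ T q.1 then (1:ℝ) else 0) := by
          intro q hq
          rw [← Finset.sum_mul, hmarg2 q hq]
        rw [Finset.sum_congr rfl hstep, Finset.sum_product]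
        rw [hxeq2 _ (hinlW₂ v hvw)]
        refine Finset.sum_congr rfl fun j hj => ?_
        rw [Fintype.sum_bool]
        by_cases hvT : (Sum.inl v : V ⊕ Bool) ∈ T j
        · simpa [hvT] using hmu'pair j hj
        · simp [hvT]
    rw [← hzeq]
    refine Finset.centerMass_mem_convexHull _ hw0 ?_ ?_
    · rw [hsumf]; norm_num
    · intro pq hpq
      obtain ⟨hPP, hne⟩ := Finset.mem_filter.mp hpq
      obtain ⟨hp, hq⟩ := Finset.mem_product.mp hPP
      exact ⟨U pq.1.1 pq.2.1, hUstab _ hp _ hq hne,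
        by funext w; by_cases hw : w ∈ U pq.1.1 pq.2.1 <;> simp [hw]⟩
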